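/- In the literal-train gadget of the Theorem 2 reduction, the two feasible rotations of a literal train (the all-true and the all-false rotation) are the only composition assignments consistent with the allowed composition changes when no pull-out occurs; and if a pull-out to a clause trip occurs at clause C_i, then the literal train's truth value must equal the sign required for literal ℓ_j to satisfy C_i (true if ℓ_j occurs unnegated in C_i, false if negated). -/
import Mathlib


/-!
STATEMENT 17: In the literal-train gadget of the Theorem 2 reduction (trips
indexed 0,…,2K+1: the start trip, a pair of trips per clause occurrence, and
the end trip; compositions 0 = 'true' double, 1 = 'false' double, 2 = single
after a pull-out), the all-true and all-false rotations are the only feasible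
assignments without a pull-out; and a pull-out at the occurrence for clause C_i
forces the literal train's truth value to equal the sign required to satisfy
C_i (true for an unnegated occurrence, false for a negated one).
-/

/-- allowed compositions at position j; `sgn i = true` iff the i-th occurrence
of the literal is unnegated. -/
def litAllowed (K : ℕ) (sgn : ℕ → Bool) (j : ℕ) : Finset ℕ :=
  if j = 0 ∨ j = 2 * K + 1 then {0, 1}
  else if j % 2 = 1 then (if sgn ((j - 1) / 2) = true then {0, 1, 2} else {0, 1})
  else if sgn ((j - 2) / 2) = false then {0, 1, 2} else {0, 1}

/-- allowed composition changes between positions j and j+1: true→true and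
false→false always; a pull-out to (and return from) the clause trip only at an
occurrence of matching sign. -/
def litChg (K : ℕ) (sgn : ℕ → Bool) (j : ℕ) : Finset (ℕ × ℕ) :=
  ({(0, 0), (1, 1)} : Finset (ℕ × ℕ))
  ∪ (if (j + 1) % 2 = 1 ∧ j + 1 < 2 * K + 1 ∧ sgn (j / 2) = true then {(0, 2)} else ∅)
  ∪ (if j % 2 = 1 ∧ j < 2 * K + 1 ∧ sgn ((j - 1) / 2) = true then {(2, 0)} else ∅)
  ∪ (if (j + 1) % 2 = 0 ∧ 2 ≤ j + 1 ∧ j + 1 ≤ 2 * K ∧ sgn ((j - 1) / 2) = false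
      then {(1, 2)} else ∅)
  ∪ (if j % 2 = 0 ∧ 2 ≤ j ∧ j ≤ 2 * K ∧ sgn ((j - 2) / 2) = false
      then {(2, 1)} else ∅)

/-- feasible composition assignments through one literal gadget -/
def LitFeas (K : ℕ) (sgn : ℕ → Bool) (x : ℕ → ℕ) : Prop :=
  (∀ j ≤ 2 * K + 1, x j ∈ litAllowed K sgn j) ∧
  (∀ j < 2 * K + 1, (x j, x (j + 1)) ∈ litChg K sgn j)

lemma mem_ite_singleton {α : Type*} [DecidableEq α] {c : Prop} [Decidable c]
    {s x : α} (h : x ∈ (if c then ({s} : Finset α) else ∅)) : c ∧ x = s := by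
  split_ifs at h with hc
  · exact ⟨hc, Finset.mem_singleton.mp h⟩
  · exact absurd h (Finset.notMem_empty x)

lemma chg_cases {K : ℕ} {sgn : ℕ → Bool} {j a b : ℕ}
    (h : (a, b) ∈ litChg K sgn j) :
    (a = 0 ∧ b = 0) ∨ (a = 1 ∧ b = 1) ∨
    (a = 0 ∧ b = 2 ∧ (j + 1) % 2 = 1) ∨ (a = 2 ∧ b = 0 ∧ j % 2 = 1) ∨
    (a = 1 ∧ b = 2 ∧ (j + 1) % 2 = 0) ∨ (a = 2 ∧ b = 1 ∧ j % 2 = 0) := by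
  unfold litChg at h
  rw [Finset.mem_union, Finset.mem_union, Finset.mem_union, Finset.mem_union] at h
  rcases h with ((((h | h) | h) | h) | h)
  · rcases Finset.mem_insert.mp h with h | h
    · exact Or.inl ⟨congrArg Prod.fst h, congrArg Prod.snd h⟩
    · exact Or.inr (Or.inl ⟨congrArg Prod.fst (Finset.mem_singleton.mp h),
        congrArg Prod.snd (Finset.mem_singleton.mp h)⟩)
  · obtain ⟨⟨hc, _⟩, he⟩ := mem_ite_singleton h
    exact Or.inr (Or.inr (Or.inl ⟨congrArg Prod.fst he, congrArg Prod.snd he, hc⟩))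
  · obtain ⟨⟨hc, _⟩, he⟩ := mem_ite_singleton h
    exact Or.inr (Or.inr (Or.inr (Or.inl ⟨congrArg Prod.fst he, congrArg Prod.snd he, hc⟩)))
  · obtain ⟨⟨hc, _⟩, he⟩ := mem_ite_singleton h
    exact Or.inr (Or.inr (Or.inr (Or.inr (Or.inl ⟨congrArg Prod.fst he, congrArg Prod.snd he, hc⟩))))
  · obtain ⟨⟨hc, _⟩, he⟩ := mem_ite_singleton h
    exact Or.inr (Or.inr (Or.inr (Or.inr (Or.inr ⟨congrArg Prod.fst he, congrArg Prod.snd he, hc⟩))))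

lemma class_path {K : ℕ} {sgn : ℕ → Bool} {x : ℕ → ℕ}
    (hc : ∀ j < 2 * K + 1, (x j, x (j + 1)) ∈ litChg K sgn j)
    (v : ℕ) (hv : v ≤ 1) (h0 : x 0 = v) :
    ∀ j ≤ 2 * K + 1, x j = v ∨ (x j = 2 ∧ j % 2 = 1 - v) := by
  intro j hj
  induction j with
  | zero => exact Or.inl h0
  | succ n ih =>
    have ihn := ih (by omega)
    have hcase := chg_cases (hc n (by omega))
    omega

lemma allowed_odd {K : ℕ} {sgn : ℕ → Bool} {j : ℕ} (hj1 : j % 2 = 1)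
    (hj2 : j < 2 * K + 1) (h : (2 : ℕ) ∈ litAllowed K sgn j) :
    sgn ((j - 1) / 2) = true := by
  unfold litAllowed at h
  rw [if_neg (by omega), if_pos hj1] at h
  split_ifs at h with hs
  · exact hs
  · exact absurd h (by decide)

lemma allowed_even {K : ℕ} {sgn : ℕ → Bool} {j : ℕ} (hj0 : 0 < j) (hj1 : j % 2 = 0)
    (hj2 : j < 2 * K + 1) (h : (2 : ℕ) ∈ litAllowed K sgn j) :
    sgn ((j - 2) / 2) = false := by
  unfold litAllowed at h
  rw [if_neg (by omega), if_neg (by omega)] at h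
  split_ifs at h with hs
  · exact hs
  · exact absurd h (by decide)

lemma mem01 {K : ℕ} {sgn : ℕ → Bool} {a : ℕ} (h : a ∈ litAllowed K sgn 0) :
    a = 0 ∨ a = 1 := by
  unfold litAllowed at h
  rw [if_pos (Or.inl rfl)] at h
  simpa using h

theorem literal_gadget_characterization
    (K : ℕ) (sgn : ℕ → Bool) (x : ℕ → ℕ) (hx : LitFeas K sgn x) :
    -- without any pull-out, only the all-true and the all-false rotations
    ((∀ j ≤ 2 * K + 1, x j ≠ 2) →
      ((∀ j ≤ 2 * K + 1, x j = 0) ∨ (∀ j ≤ 2 * K + 1, x j = 1))) ∧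
    -- a pull-out forces the truth value matching the occurrence's sign
    (∀ i < K,
      (x (2 * i + 1) = 2 →
        sgn i = true ∧ ∀ j ≤ 2 * K + 1, x j = 2 ∨ x j = 0) ∧
      (x (2 * i + 2) = 2 →
        sgn i = false ∧ ∀ j ≤ 2 * K + 1, x j = 2 ∨ x j = 1)) := by
  obtain ⟨ha, hc⟩ := hx
  have h0 := mem01 (ha 0 (by omega))
  constructor
  · intro hno
    rcases h0 with h0 | h0
    · left; intro j hj
      rcases class_path hc 0 (by omega) h0 j hj with h | ⟨h2, _⟩
      · exact h
      · exact absurd h2 (hno j hj)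
    · right; intro j hj
      rcases class_path hc 1 (by omega) h0 j hj with h | ⟨h2, _⟩
      · exact h
      · exact absurd h2 (hno j hj)
  · intro i hi
    constructor
    · intro h2
      have hs : sgn ((2 * i + 1 - 1) / 2) = true :=
        allowed_odd (K := K) (j := 2 * i + 1) (by omega) (by omega)
          (by have hm := ha (2 * i + 1) (by omega); rwa [h2] at hm)
      have hi' : (2 * i + 1 - 1) / 2 = i := by omega
      rw [hi'] at hs
      have hx0 : x 0 = 0 := by
        rcases h0 with h0 | h0
        · exact h0
        · have := class_path hc 1 (by omega) h0 (2 * i + 1) (by omega)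
          omega
      refine ⟨hs, fun j hj => ?_⟩
      have := class_path hc 0 (by omega) hx0 j hj
      omega
    · intro h2
      have hs : sgn ((2 * i + 2 - 2) / 2) = false :=
        allowed_even (K := K) (j := 2 * i + 2) (by omega) (by omega) (by omega)
          (by have hm := ha (2 * i + 2) (by omega); rwa [h2] at hm)
      have hi' : (2 * i + 2 - 2) / 2 = i := by omega
      rw [hi'] at hs
      have hx0 : x 0 = 1 := by
        rcases h0 with h0 | h0
        · have := class_path hc 0 (by omega) h0 (2 * i + 2) (by omega)
          omega
        · exact h0
      refine ⟨hs, fun j hj => ?_⟩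
      have := class_path hc 1 (by omega) hx0 j hj
      omega
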